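/- Let π, π₀ be two discrete CDFs on {0,...,J} with π strictly increasing on its support, and let Y ~ π₀. Define Res(t; y) as the CDF of Uniform(π(y−1), π(y)). Then for t ∈ [0,1] with π(y_t − 1) ≤ t ≤ π(y_t) for some y_t, E_Y[Res(t; Y)] = π₀(y_t − 1) + [(t − π(y_t − 1))/(π(y_t) − π(y_t − 1))]·(π₀(y_t) − π₀(y_t − 1)). In particular, E_Y[Res(t; Y)] = t for all t if and only if π = π₀ on {0,...,J}. -/

import Mathlib

noncomputable def unifCDF (a b t : ℝ) : ℝ := max 0 (min 1 ((t - a) / (b - a)))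
noncomputable def prevCDF (π : ℕ → ℝ) (y : ℕ) : ℝ := if y = 0 then 0 else π (y - 1)
noncomputable def Res (π : ℕ → ℝ) (y : ℕ) (t : ℝ) : ℝ := unifCDF (prevCDF π y) (π y) t

lemma unifCDF_one (a b t : ℝ) (hab : a < b) (h : b ≤ t) : unifCDF a b t = 1 := by
  unfold unifCDF
  have h1 : 1 ≤ (t - a)/(b - a) := (le_div_iff₀ (by linarith)).mpr (by linarith)
  rw [min_eq_left h1, max_eq_right zero_le_one]

lemma unifCDF_zero (a b t : ℝ) (hab : a < b) (h : t ≤ a) : unifCDF a b t = 0 := by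
  unfold unifCDF
  have h1 : (t - a)/(b - a) ≤ 0 := div_nonpos_of_nonpos_of_nonneg (by linarith) (by linarith)
  rw [min_eq_right (by linarith), max_eq_left h1]

lemma unifCDF_mid (a b t : ℝ) (hab : a < b) (h1 : a ≤ t) (h2 : t ≤ b) :
    unifCDF a b t = (t - a)/(b - a) := by
  have hx0 : 0 ≤ (t-a)/(b-a) := div_nonneg (by linarith) (by linarith)
  have hx1 : (t-a)/(b-a) ≤ 1 := (div_le_one (by linarith)).mpr (by linarith)
  unfold unifCDF
  rw [min_eq_right hx1, max_eq_right hx0]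

lemma pi_mono (J : ℕ) (π : ℕ → ℝ) (h : ∀ y ≤ J, prevCDF π y < π y) :
    ∀ a b, a ≤ b → b ≤ J → π a ≤ π b := by
  intro a b hab hbJ
  obtain ⟨n, rfl⟩ := Nat.exists_eq_add_of_le hab
  clear hab
  induction n with
  | zero => simp
  | succ n ih =>
    have h1 : a + n + 1 ≤ J := hbJ
    have h2 : π (a + n) ≤ π (a + n + 1) := by
      have := h (a + n + 1) h1
      simp [prevCDF] at this
      linarith
    have h3 := ih (by omega)
    show π a ≤ π (a + n + 1)
    linarith

lemma telescope (π₀ : ℕ → ℝ) :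
    ∀ n, ∑ y ∈ Finset.range n, (π₀ y - prevCDF π₀ y) = prevCDF π₀ n := by
  intro n
  induction n with
  | zero => simp [prevCDF]
  | succ n ih =>
    rw [Finset.sum_range_succ, ih]
    simp [prevCDF]

theorem part1
    (J : ℕ) (π π₀ : ℕ → ℝ)
    (hπinc : ∀ y ≤ J, prevCDF π y < π y)
    (t : ℝ) (yt : ℕ) (hytJ : yt ≤ J) (h1 : prevCDF π yt ≤ t) (h2 : t ≤ π yt) :
    ∑ y ∈ Finset.range (J + 1), (π₀ y - prevCDF π₀ y) * Res π y t
      = prevCDF π₀ yt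
          + ((t - prevCDF π yt) / (π yt - prevCDF π yt)) * (π₀ yt - prevCDF π₀ yt) := by
  have hmono := pi_mono J π hπinc
  have hsplit : Finset.range (J + 1) = Finset.range (yt + 1) ∪ Finset.Ico (yt + 1) (J + 1) := by
    simp only [Finset.range_eq_Ico]
    exact (Finset.Ico_union_Ico_eq_Ico (by omega) (by omega)).symm
  rw [hsplit, Finset.sum_union (by
      rw [Finset.range_eq_Ico]; exact Finset.Ico_disjoint_Ico_consecutive 0 (yt+1) (J+1))]
  have hupper : ∑ y ∈ Finset.Ico (yt + 1) (J + 1), (π₀ y - prevCDF π₀ y) * Res π y t = 0 := by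
    apply Finset.sum_eq_zero
    intro y hy
    simp only [Finset.mem_Ico] at hy
    have hyJ : y ≤ J := by omega
    have hy1 : y ≠ 0 := by omega
    have hprev : prevCDF π y = π (y - 1) := by simp [prevCDF, hy1]
    have : π yt ≤ π (y - 1) := hmono yt (y - 1) (by omega) (by omega)
    have : t ≤ prevCDF π y := by rw [hprev]; linarith
    rw [Res, unifCDF_zero _ _ _ (hπinc y hyJ) this, mul_zero]
  rw [hupper, add_zero, Finset.sum_range_succ]
  have hlow : ∀ y ∈ Finset.range yt,
      (π₀ y - prevCDF π₀ y) * Res π y t = π₀ y - prevCDF π₀ y := by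
    intro y hy
    simp only [Finset.mem_range] at hy
    have hyJ : y ≤ J := by omega
    have hy0 : yt ≠ 0 := by omega
    have hprev : prevCDF π yt = π (yt - 1) := by simp [prevCDF, hy0]
    have : π y ≤ π (yt - 1) := hmono y (yt - 1) (by omega) (by omega)
    have ht : π y ≤ t := by rw [hprev] at h1; linarith
    rw [Res, unifCDF_one _ _ _ (hπinc y hyJ) ht, mul_one]
  rw [Finset.sum_congr rfl hlow, telescope]
  rw [Res, unifCDF_mid _ _ _ (hπinc yt hytJ) h1 h2]
  ring

theorem functional_residual_expectation_misspecified
    (J : ℕ) (π π₀ : ℕ → ℝ)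
    (hπinc : ∀ y ≤ J, prevCDF π y < π y) (hπJ : π J = 1)
    (hπ₀mono : ∀ y ≤ J, prevCDF π₀ y ≤ π₀ y) (hπ₀0 : 0 ≤ π₀ 0) (hπ₀J : π₀ J = 1) :
    (∀ t ∈ Set.Icc (0:ℝ) 1, ∀ yt ≤ J, prevCDF π yt ≤ t → t ≤ π yt →
      ∑ y ∈ Finset.range (J + 1), (π₀ y - prevCDF π₀ y) * Res π y t
        = prevCDF π₀ yt
            + ((t - prevCDF π yt) / (π yt - prevCDF π yt)) * (π₀ yt - prevCDF π₀ yt)) ∧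
    ((∀ t ∈ Set.Icc (0:ℝ) 1,
        ∑ y ∈ Finset.range (J + 1), (π₀ y - prevCDF π₀ y) * Res π y t = t)
      ↔ ∀ y ≤ J, π y = π₀ y) := by
  have hmono := pi_mono J π hπinc
  constructor
  · intro t _ yt hytJ h1 h2
    exact part1 J π π₀ hπinc t yt hytJ h1 h2
  · constructor
    · intro H y hyJ
      have ht0 : (0:ℝ) ≤ π y := by
        have h0 : prevCDF π 0 < π 0 := hπinc 0 (Nat.zero_le J)
        simp [prevCDF] at h0
        have := hmono 0 y (Nat.zero_le y) hyJ
        linarith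
      have ht1 : π y ≤ 1 := by
        have := hmono y J hyJ le_rfl
        linarith [hπJ]
      have hp := part1 J π π₀ hπinc (π y) y hyJ (le_of_lt (hπinc y hyJ)) le_rfl
      have hne : π y - prevCDF π y ≠ 0 := by
        have := hπinc y hyJ; linarith
      rw [div_self hne, one_mul] at hp
      have := H (π y) ⟨ht0, ht1⟩
      rw [hp] at this
      linarith
    · intro H t ht
      obtain ⟨ht0, ht1⟩ := ht
      have hex : ∃ y, y ≤ J ∧ t ≤ π y := ⟨J, le_rfl, by rw [hπJ]; exact ht1⟩
      have hexists : ∃ y, t ≤ π y := ⟨J, by rw [hπJ]; exact ht1⟩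
      classical
      set yt := Nat.find hexists with hyt
      have hyt2 : t ≤ π yt := Nat.find_spec hexists
      have hytJ : yt ≤ J := Nat.find_min' hexists (by rw [hπJ]; exact ht1)
      have hyt1 : prevCDF π yt ≤ t := by
        by_cases h0 : yt = 0
        · simp [prevCDF, h0]; exact ht0
        · have := Nat.find_min hexists (m := yt - 1) (by omega)
          simp [prevCDF, h0]
          push_neg at this
          linarith
      have hp := part1 J π π₀ hπinc t yt hytJ hyt1 hyt2
      have hpp : ∀ y ≤ J, π y = π₀ y := H
      have heq1 : π yt = π₀ yt := hpp yt hytJ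
      have heq2 : prevCDF π yt = prevCDF π₀ yt := by
        by_cases h0 : yt = 0
        · simp [prevCDF, h0]
        · simp [prevCDF, h0]; exact hpp (yt - 1) (by omega)
      rw [hp, ← heq1, ← heq2]
      have hne : π yt - prevCDF π yt ≠ 0 := by
        have := hπinc yt hytJ; linarith
      field_simp
      ring
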